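/- The Hilbert function sequence of R/I for any almost reverse lexicographic ideal I in a polynomial ring R = k[x_1,...,x_n] is unimodal at each tail. -/

import Mathlib

open scoped Classical

/-- Degree of an exponent vector (monomial). -/
def mdeg {n : ℕ} (m : Fin n → ℕ) : ℕ := ∑ i, m i

/-- Degree reverse lexicographic order: `M > N`. -/
def RevLexGT {n : ℕ} (M N : Fin n → ℕ) : Prop :=
  mdeg N < mdeg M ∨
    (mdeg M = mdeg N ∧ ∃ s : Fin n, (∀ i : Fin n, s < i → M i = N i) ∧ M s < N s)

/-- A monomial ideal, identified with its set of monomials (exponent vectors),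
is upward closed under divisibility. -/
def MonIdeal {n : ℕ} (I : Set (Fin n → ℕ)) : Prop :=
  ∀ m ∈ I, ∀ m' : Fin n → ℕ, (∀ i, m i ≤ m' i) → m' ∈ I

/-- `m` is a minimal generator of the monomial ideal `I`. -/
def MinGen {n : ℕ} (I : Set (Fin n → ℕ)) (m : Fin n → ℕ) : Prop :=
  m ∈ I ∧ ∀ m' ∈ I, (∀ i, m' i ≤ m i) → m' = m

/-- Almost reverse lexicographic ideal. -/
def ARL {n : ℕ} (I : Set (Fin n → ℕ)) : Prop :=
  ∀ M N : Fin n → ℕ, MinGen I N → mdeg M = mdeg N → RevLexGT M N → M ∈ I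

/-- Strongly stable monomial ideal. -/
def StronglyStable {n : ℕ} (I : Set (Fin n → ℕ)) : Prop :=
  MonIdeal I ∧ ∀ M ∈ I, ∀ i j : Fin n, j < i → 0 < M i →
    (fun k => if k = i then M i - 1 else if k = j then M j + 1 else M k) ∈ I

/-- The last generator `M_ω` of a monomial ideal: a minimal generator of maximal
degree which is smallest in the degree reverse lexicographic order among the
minimal generators of that degree. -/
def IsLastGen {n : ℕ} (I : Set (Fin n → ℕ)) (W : Fin n → ℕ) : Prop :=
  MinGen I W ∧ (∀ N, MinGen I N → mdeg N ≤ mdeg W) ∧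
    (∀ N, MinGen I N → mdeg N = mdeg W → N = W ∨ RevLexGT N W)

/-- `max M`: the largest (1-based) index of a variable dividing `M` (0 for `M = 1`). -/
def maxVar {n : ℕ} (m : Fin n → ℕ) : ℕ :=
  Finset.univ.sup (fun i : Fin n => if 0 < m i then i.1 + 1 else 0)

/-- Hilbert function of `R/I`: the number of monomials of degree `d` not in `I`. -/
noncomputable def hilb {n : ℕ} (I : Set (Fin n → ℕ)) (d : ℕ) : ℕ :=
  Set.ncard {m : Fin n → ℕ | mdeg m = d ∧ m ∉ I}

/-- Truncation of an exponent vector to its first `i` coordinates. -/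
def truncW {n : ℕ} (W : Fin n → ℕ) (i : ℕ) : Fin n → ℕ :=
  fun j => if j.1 < i then W j else 0

/-- The set `𝓘_i` (for `i ≤ μ-2`): exponent vectors supported on the first `i`
coordinates, coordinatewise below the `f_j`'s, i.e. not lying in `I`. -/
def Iset {n : ℕ} (I : Set (Fin n → ℕ)) (i : ℕ) : Set (Fin n → ℕ) :=
  {α | (∀ k : Fin n, i ≤ k.1 → α k = 0) ∧ α ∉ I}

/-- The set `𝓘_{μ-1}`, which additionally requires `α ≥ (ω_1,…,ω_{μ-1})`. -/
def IsetLast {n : ℕ} (I : Set (Fin n → ℕ)) (W : Fin n → ℕ) (μ : ℕ) :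
    Set (Fin n → ℕ) :=
  {α | α ∈ Iset I (μ - 1) ∧ (α = truncW W (μ - 1) ∨ RevLexGT α (truncW W (μ - 1)))}

/-- `f_{i+1}(α) = min {t : x^α x_{i+1}^t ∈ I}` (ℕ-valued, junk `0` if no such `t`). -/
noncomputable def fmin {n : ℕ} (I : Set (Fin n → ℕ)) (α : Fin n → ℕ) (i : Fin n) : ℕ :=
  sInf {t | α + Pi.single i t ∈ I}

/-- `f_{i+1}(α)` valued in `ℕ∞` (equal to `⊤` when no power works). -/
noncomputable def fminTop {n : ℕ} (I : Set (Fin n → ℕ)) (α : Fin n → ℕ) (i : Fin n) : ℕ∞ :=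
  sInf ((fun t : ℕ => (t : ℕ∞)) '' {t | α + Pi.single i t ∈ I})

/-- Iterated truncated difference sequence `h^{(i)}`. -/
def hseq (h : ℕ → ℕ) : ℕ → ℕ → ℕ
  | 0, d => h d
  | _ + 1, 0 => 1
  | i + 1, e + 1 => hseq h i (e + 1) - hseq h i e

/-- The set whose infimum is `r_i(h)`. -/
def rset (h : ℕ → ℕ) (i : ℕ) : Set ℕ :=
  {d | 1 ≤ d ∧ hseq h i d ≤ hseq h i (d - 1)}

/-- `D(h) = min {i : r_i < ∞}`. -/
noncomputable def Dval (h : ℕ → ℕ) : ℕ := sInf {i | (rset h i).Nonempty}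

/-- `h` is unimodal at each tail. -/
def UnimodalAtTails (h : ℕ → ℕ) : Prop :=
  ∀ i, Dval h ≤ i → i < max 1 (h 1) →
    ∀ d, (∃ r ∈ rset h i, r ≤ d) → hseq h i d ≤ hseq h i (d - 1)

/-- The polynomial `Π (1 - z^{d_i})`. -/
noncomputable def froPoly (ds : List ℕ) : Polynomial ℤ :=
  (ds.map (fun d => 1 - Polynomial.X ^ d)).prod

/-- Coefficient of `z^i` in the power series `Π (1 - z^{d_i}) / (1-z)^n`. -/
noncomputable def froCoeff (n : ℕ) (ds : List ℕ) (i : ℕ) : ℤ :=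
  ∑ j ∈ Finset.range (i + 1),
    (froPoly ds).coeff j * (Nat.choose (n - 1 + (i - j)) (i - j) : ℤ)

/-- The Fröberg sequence `|n; d_1,…,d_m|`: the truncation `| · |` of the power
series `Π (1 - z^{d_i}) / (1-z)^n`. -/
noncomputable def fro (n : ℕ) (ds : List ℕ) (i : ℕ) : ℕ :=
  if ∀ j ≤ i, 0 < froCoeff n ds j then (froCoeff n ds i).toNat else 0

section ArlProofAux
-- basic lemmas
lemma mdeg_eq_zero {n : ℕ} {m : Fin n → ℕ} (h : mdeg m = 0) : m = 0 := by
  funext i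
  have := Finset.sum_eq_zero_iff.mp h i (Finset.mem_univ i)
  simpa using this

lemma le_mdeg {n : ℕ} (m : Fin n → ℕ) (i : Fin n) : m i ≤ mdeg m :=
  Finset.single_le_sum (fun j _ => Nat.zero_le (m j)) (Finset.mem_univ i)

lemma finite_slice (n d : ℕ) : {m : Fin n → ℕ | mdeg m = d}.Finite := by
  apply Set.Finite.subset (Set.Finite.pi (fun i : Fin n => Set.finite_Iic d))
  intro m hm i _
  simp only [Set.mem_Iic]
  exact hm ▸ le_mdeg m i

lemma mdeg_le_of_le {n : ℕ} {a b : Fin n → ℕ} (h : ∀ i, a i ≤ b i) : mdeg a ≤ mdeg b :=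
  Finset.sum_le_sum (fun i _ => h i)

lemma eq_of_le_of_mdeg_le {n : ℕ} {a b : Fin n → ℕ} (h : ∀ i, a i ≤ b i)
    (hd : mdeg b ≤ mdeg a) : a = b := by
  funext i
  by_contra hne
  have hlt : a i < b i := lt_of_le_of_ne (h i) hne
  have : mdeg a < mdeg b :=
    Finset.sum_lt_sum (fun j _ => h j) ⟨i, Finset.mem_univ i, hlt⟩
  omega

lemma exists_sub {n : ℕ} : ∀ (k t : ℕ) (M : Fin n → ℕ), mdeg M = t + k →
    ∃ M0 : Fin n → ℕ, (∀ i, M0 i ≤ M i) ∧ mdeg M0 = t := by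
  intro k
  induction k with
  | zero => exact fun t M h => ⟨M, fun i => le_rfl, by omega⟩
  | succ k ih =>
    intro t M h
    have hpos : 0 < mdeg M := by omega
    have : ∃ j, 0 < M j := by
      by_contra hc
      push_neg at hc
      have : mdeg M = 0 := Finset.sum_eq_zero (fun j _ => by have := hc j; omega)
      omega
    obtain ⟨j, hj⟩ := this
    have hsum : mdeg (Function.update M j (M j - 1)) + 1 = mdeg M := by
      have h1 : mdeg (Function.update M j (M j - 1))
          = (M j - 1) + ∑ i ∈ Finset.univ.erase j, M i := by
        rw [mdeg, ← Finset.add_sum_erase _ _ (Finset.mem_univ j)]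
        simp only [Function.update_self]
        congr 1
        exact Finset.sum_congr rfl (fun i hi =>
          Function.update_of_ne (Finset.ne_of_mem_erase hi) _ _)
      have h2 : mdeg M = M j + ∑ i ∈ Finset.univ.erase j, M i := by
        rw [mdeg, ← Finset.add_sum_erase _ _ (Finset.mem_univ j)]
      omega
    obtain ⟨M0, hle, hdeg⟩ := ih t (Function.update M j (M j - 1)) (by omega)
    refine ⟨M0, fun i => le_trans (hle i) ?_, hdeg⟩
    by_cases hij : i = j
    · subst hij; simp
    · simp [Function.update_of_ne hij]

lemma exists_minGen_le {n : ℕ} {I : Set (Fin n → ℕ)} {m : Fin n → ℕ}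
    (hm : m ∈ I) : ∃ N, MinGen I N ∧ ∀ i, N i ≤ m i := by
  set T := {m' ∈ I | ∀ i, m' i ≤ m i} with hT
  have hne : (mdeg '' T).Nonempty := ⟨mdeg m, m, ⟨hm, fun i => le_rfl⟩, rfl⟩
  obtain ⟨N, hNT, hNdeg⟩ := Nat.sInf_mem hne
  refine ⟨N, ⟨hNT.1, ?_⟩, hNT.2⟩
  intro m'' hm'' hle
  have hm''T : m'' ∈ T := ⟨hm'', fun i => le_trans (hle i) (hNT.2 i)⟩
  have : sInf (mdeg '' T) ≤ mdeg m'' := Nat.sInf_le ⟨m'', hm''T, rfl⟩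
  exact eq_of_le_of_mdeg_le hle (by omega)

lemma mdeg_snoc {n : ℕ} (α : Fin n → ℕ) (c : ℕ) : mdeg (Fin.snoc α c) = mdeg α + c := by
  rw [mdeg, Fin.sum_univ_castSucc]
  simp [mdeg]

/-- the restriction of `I` to the first `n` of `n+1` variables -/
def Ibar {n : ℕ} (I : Set (Fin (n+1) → ℕ)) : Set (Fin n → ℕ) :=
  {α | Fin.snoc α 0 ∈ I}

lemma Ibar_monIdeal {n : ℕ} {I : Set (Fin (n+1) → ℕ)} (hI : MonIdeal I) :
    MonIdeal (Ibar I) := by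
  intro α hα α' hle
  refine hI _ hα _ ?_
  intro i
  induction i using Fin.lastCases with
  | last => simp
  | cast i => simpa using hle i

lemma Ibar_minGen {n : ℕ} {I : Set (Fin (n+1) → ℕ)} {N : Fin n → ℕ}
    (hN : MinGen (Ibar I) N) : MinGen I (Fin.snoc N 0) := by
  refine ⟨hN.1, ?_⟩
  intro m'' hm'' hle
  have hlast : m'' (Fin.last n) = 0 := by
    have := hle (Fin.last n); simpa using this
  have hm''eq : Fin.snoc (Fin.init m'') (0 : ℕ) = m'' := by
    rw [← hlast]; exact Fin.snoc_init_self m''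
  have hinit : Fin.init m'' ∈ Ibar I := by
    show Fin.snoc (Fin.init m'') 0 ∈ I
    rw [hm''eq]; exact hm''
  have hle' : ∀ i, Fin.init m'' i ≤ N i := by
    intro i
    have := hle i.castSucc
    simpa [Fin.init] using this
  have := hN.2 _ hinit hle'
  rw [← hm''eq, this]

lemma Ibar_ARL {n : ℕ} {I : Set (Fin (n+1) → ℕ)} (hI : MonIdeal I) (hA : ARL I) :
    ARL (Ibar I) := by
  intro M N hN hdeg hgt
  show Fin.snoc M 0 ∈ I
  refine hA _ _ (Ibar_minGen hN) (by rw [mdeg_snoc, mdeg_snoc, hdeg]) ?_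
  rcases hgt with h | ⟨heq, s, hs, hlt⟩
  · left; rw [mdeg_snoc, mdeg_snoc]; omega
  · right
    refine ⟨by rw [mdeg_snoc, mdeg_snoc, heq], s.castSucc, ?_, by simpa using hlt⟩
    intro i hi
    induction i using Fin.lastCases with
    | last => simp
    | cast i =>
      have : s < i := by simpa [Fin.castSucc_lt_castSucc_iff] using hi
      simpa using hs i this

lemma hilb_Ibar {n : ℕ} (I : Set (Fin (n+1) → ℕ)) (d : ℕ) :
    hilb (Ibar I) d
      = Set.ncard {M : Fin (n+1) → ℕ | mdeg M = d ∧ M ∉ I ∧ M (Fin.last n) = 0} := by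
  have himg : (fun α : Fin n → ℕ => (Fin.snoc α 0 : Fin (n+1) → ℕ)) '' {α | mdeg α = d ∧ α ∉ Ibar I}
      = {M : Fin (n+1) → ℕ | mdeg M = d ∧ M ∉ I ∧ M (Fin.last n) = 0} := by
    ext M
    constructor
    · rintro ⟨α, ⟨hd, hni⟩, rfl⟩
      exact ⟨by rw [mdeg_snoc]; omega, hni, by simp⟩
    · rintro ⟨hd, hni, hlast⟩
      have hMeq : Fin.snoc (Fin.init M) (0:ℕ) = M := by
        funext i
        induction i using Fin.lastCases with
        | last => simp [hlast.symm]
        | cast i => simp [Fin.init]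
      refine ⟨Fin.init M, ⟨?_, ?_⟩, hMeq⟩
      · have h2 := mdeg_snoc (Fin.init M) 0
        rw [hMeq] at h2; omega
      · show Fin.snoc (Fin.init M) (0:ℕ) ∈ I → False
        rw [hMeq]; exact hni
  have hinj : Function.Injective (fun α : Fin n → ℕ => (Fin.snoc α 0 : Fin (n+1) → ℕ)) := by
    intro a b hab
    have := congrArg Fin.init hab
    simpa using this
  rw [hilb, ← himg, Set.ncard_image_of_injective _ hinj]

lemma mdeg_add {n : ℕ} (a b : Fin n → ℕ) : mdeg (a + b) = mdeg a + mdeg b := by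
  simpa [mdeg] using Finset.sum_add_distrib

lemma mdeg_single {n : ℕ} (j : Fin n) (c : ℕ) : mdeg (Pi.single j c) = c := by
  simp [mdeg, Finset.sum_pi_single']

lemma claimE {n : ℕ} {I : Set (Fin (n+1) → ℕ)} (hI : MonIdeal I) (hA : ARL I)
    {m : Fin (n+1) → ℕ} (hm : m ∉ I) (hmE : m + Pi.single (Fin.last n) 1 ∈ I) :
    ∀ M : Fin (n+1) → ℕ, M (Fin.last n) = 0 → mdeg m + 1 ≤ mdeg M → M ∈ I := by
  obtain ⟨N, hN, hNle⟩ := exists_minGen_le hmE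
  have hNlast : 0 < N (Fin.last n) := by
    by_contra hc
    push_neg at hc
    refine hm (hI _ hN.1 _ ?_)
    intro i
    have h1 := hNle i
    rw [Pi.add_apply, Pi.single_apply] at h1
    by_cases hi : i = Fin.last n
    · subst hi; omega
    · simp [hi] at h1; omega
  have hNdeg : mdeg N ≤ mdeg m + 1 := by
    have := mdeg_le_of_le hNle
    rw [mdeg_add, mdeg_single] at this
    exact this
  intro M hM0 hMd
  obtain ⟨M0, hle, hdeg⟩ := exists_sub (mdeg M - mdeg N) (mdeg N) M (by omega)
  have hgt : RevLexGT M0 N := by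
    right
    refine ⟨hdeg, Fin.last n, fun i hi => absurd hi (not_lt.mpr (Fin.le_last i)), ?_⟩
    have := hle (Fin.last n)
    omega
  exact hI _ (hA M0 N hN hdeg hgt) _ hle

lemma KI {n : ℕ} {I : Set (Fin (n+1) → ℕ)} (hI : MonIdeal I) (hA : ARL I) (d : ℕ) :
    hilb (Ibar I) (d+1) = hilb I (d+1) - hilb I d := by
  classical
  set E : Fin (n+1) → ℕ := Pi.single (Fin.last n) 1 with hE
  set P0 : Set (Fin (n+1) → ℕ) :=
    {M | mdeg M = d+1 ∧ M ∉ I ∧ M (Fin.last n) = 0} with hP0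
  set P1 : Set (Fin (n+1) → ℕ) := {M | mdeg M = d+1 ∧ M ∉ I ∧ 0 < M (Fin.last n)} with hP1
  set B : Set (Fin (n+1) → ℕ) := {m | mdeg m = d ∧ m + E ∉ I} with hB
  set S : Set (Fin (n+1) → ℕ) := {m | mdeg m = d ∧ m ∉ I ∧ m + E ∈ I} with hS
  have hEdeg : mdeg E = 1 := mdeg_single _ 1
  have hBsub : B ⊆ {m | mdeg m = d ∧ m ∉ I} := by
    rintro m ⟨hd, hnm⟩
    exact ⟨hd, fun hmI => hnm (hI _ hmI _ (fun i => by simp [Pi.add_apply]))⟩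
  -- finiteness
  have finP0 : P0.Finite := (finite_slice (n+1) (d+1)).subset (fun m hm => hm.1)
  have finP1 : P1.Finite := (finite_slice (n+1) (d+1)).subset (fun m hm => hm.1)
  have finB : B.Finite := (finite_slice (n+1) d).subset (fun m hm => hm.1)
  have finS : S.Finite := (finite_slice (n+1) d).subset (fun m hm => hm.1)
  -- splitting the degree d+1 piece
  have hsplit1 : hilb I (d+1) = P0.ncard + P1.ncard := by
    have : {m : Fin (n+1) → ℕ | mdeg m = d+1 ∧ m ∉ I} = P0 ∪ P1 := by
      ext m
      simp only [hP0, hP1, Set.mem_setOf_eq, Set.mem_union]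
      constructor
      · rintro ⟨hd, hni⟩
        rcases Nat.eq_zero_or_pos (m (Fin.last n)) with h | h
        · exact Or.inl ⟨hd, hni, h⟩
        · exact Or.inr ⟨hd, hni, h⟩
      · rintro (⟨hd, hni, _⟩ | ⟨hd, hni, _⟩) <;> exact ⟨hd, hni⟩
    rw [hilb, this, Set.ncard_union_eq ?_ finP0 finP1]
    rw [Set.disjoint_left]
    rintro m ⟨_, _, h0⟩ ⟨_, _, h1⟩
    omega
  -- P1 is the image of B
  have himg : P1 = (fun m => m + E) '' B := by
    ext M
    constructor
    · rintro ⟨hd, hni, hpos⟩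
      have hEle : ∀ i, E i ≤ M i := by
        intro i
        rw [hE, Pi.single_apply]
        by_cases hi : i = Fin.last n
        · subst hi; simpa using Nat.succ_le_of_lt hpos
        · simp [hi]
      refine ⟨M - E, ⟨?_, ?_⟩, ?_⟩
      · have hMe : (M - E) + E = M := by
          funext i
          simp only [Pi.add_apply, Pi.sub_apply]
          have := hEle i; omega
        have := mdeg_add (M - E) E
        rw [hMe, hEdeg] at this
        omega
      · have hMe : (M - E) + E = M := by
          funext i
          simp only [Pi.add_apply, Pi.sub_apply]
          have := hEle i; omega
        rw [hMe]; exact hni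
      · funext i
        simp only [Pi.add_apply, Pi.sub_apply]
        have := hEle i; omega
    · rintro ⟨m, ⟨hd, hni⟩, rfl⟩
      refine ⟨by rw [mdeg_add, hEdeg]; omega, hni, ?_⟩
      simp [hE, Pi.add_apply]
  have hcard1 : P1.ncard = B.ncard := by
    rw [himg]
    apply Set.ncard_image_of_injective
    intro a b hab
    funext i
    have := congrFun hab i
    simp only [Pi.add_apply] at this
    omega
  -- splitting the degree d piece
  have hsplit0 : hilb I d = B.ncard + S.ncard := by
    have : {m : Fin (n+1) → ℕ | mdeg m = d ∧ m ∉ I} = B ∪ S := by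
      ext m
      constructor
      · rintro ⟨hd, hni⟩
        by_cases hmem : m + E ∈ I
        · exact Or.inr ⟨hd, hni, hmem⟩
        · exact Or.inl ⟨hd, hmem⟩
      · rintro (hb | ⟨hd, hni, _⟩)
        · exact hBsub hb
        · exact ⟨hd, hni⟩
    rw [hilb, this, Set.ncard_union_eq ?_ finB finS]
    rw [Set.disjoint_left]
    rintro m ⟨_, h0⟩ ⟨_, _, h1⟩
    exact h0 h1
  have hP0card : hilb (Ibar I) (d+1) = P0.ncard := hilb_Ibar I (d+1)
  by_cases hSne : S.Nonempty
  · obtain ⟨m, hmd, hmni, hmE⟩ := hSne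
    have hP0empty : P0.ncard = 0 := by
      have he : P0 = ∅ := by
        rw [Set.eq_empty_iff_forall_notMem]
        rintro M ⟨hd, hni, h0⟩
        exact hni (claimE hI hA hmni hmE M h0 (by omega))
      rw [he, Set.ncard_empty]
    have hSpos : 0 < S.ncard := (Set.ncard_pos finS).mpr ⟨m, hmd, hmni, hmE⟩
    rw [hP0card]
    omega
  · have hS0 : S.ncard = 0 := by
      rw [Set.not_nonempty_iff_eq_empty.mp hSne, Set.ncard_empty]
    rw [hP0card]
    omega

lemma ZP {k : ℕ} {J : Set (Fin k → ℕ)} (hJ : MonIdeal J) (d : ℕ) (h : hilb J d = 0) :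
    hilb J (d+1) = 0 := by
  have hfin : {m : Fin k → ℕ | mdeg m = d ∧ m ∉ J}.Finite :=
    (finite_slice k d).subset (fun m hm => hm.1)
  have hempty : {m : Fin k → ℕ | mdeg m = d ∧ m ∉ J} = ∅ := (Set.ncard_eq_zero hfin).mp h
  rw [hilb, Set.ncard_eq_zero ((finite_slice k (d+1)).subset (fun m hm => hm.1))]
  rw [Set.eq_empty_iff_forall_notMem]
  rintro M ⟨hd, hni⟩
  obtain ⟨M0, hle, hdeg⟩ := exists_sub 1 d M (by omega)
  have hM0 : M0 ∉ J := fun h' => hni (hJ _ h' _ hle)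
  have : M0 ∈ ({} : Set (Fin k → ℕ)) := hempty ▸ (⟨hdeg, hM0⟩ : M0 ∈ {m | mdeg m = d ∧ m ∉ J})
  simp at this

lemma hilb_zero {n : ℕ} {I : Set (Fin n → ℕ)} (h0 : 0 ∉ I) : hilb I 0 = 1 := by
  have : {m : Fin n → ℕ | mdeg m = 0 ∧ m ∉ I} = {0} := by
    ext m
    constructor
    · rintro ⟨hd, _⟩; exact mdeg_eq_zero hd
    · rintro rfl
      exact ⟨Finset.sum_eq_zero (fun i _ => rfl), h0⟩
  rw [hilb, this, Set.ncard_singleton]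

lemma Z1 {h : ℕ → ℕ} (hz : ∀ e, 1 ≤ e → h e = 0) :
    ∀ i d, 1 ≤ i → 1 ≤ d → hseq h i d = 0 := by
  intro i
  induction i with
  | zero => omega
  | succ i ih =>
    intro d _ hd
    obtain ⟨e, rfl⟩ : ∃ e, d = e + 1 := ⟨d - 1, by omega⟩
    show hseq h i (e+1) - hseq h i e = 0
    rcases Nat.eq_zero_or_pos i with rfl | hi
    · show h (e+1) - h e = 0
      rw [hz (e+1) (by omega)]
      omega
    · rw [ih (e+1) hi (by omega)]
      omega

lemma tail_of_zero {n : ℕ} {I : Set (Fin n → ℕ)} (hz : ∀ e, 1 ≤ e → hilb I e = 0) :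
    UnimodalAtTails (fun d => hilb I d) := by
  rintro i _ _ d ⟨r, ⟨h1r, _⟩, hrd⟩
  rcases Nat.eq_zero_or_pos i with rfl | hi
  · show hilb I d ≤ hilb I (d - 1)
    rw [hz d (by omega)]
    exact Nat.zero_le _
  · have hzz := Z1 (h := fun e => hilb I e) (fun e he => hz e he) i d hi (by omega)
    rw [hzz]
    exact Nat.zero_le _

lemma dec_chain {n : ℕ} {I : Set (Fin (n+1) → ℕ)} (hI : MonIdeal I) (hA : ARL I)
    (e : ℕ) (he : hilb I (e+1) ≤ hilb I e) :
    ∀ f, e ≤ f → hilb I (f+1) ≤ hilb I f := by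
  intro f hef
  induction f, hef using Nat.le_induction with
  | base => exact he
  | succ f hef ih =>
    have h1 : hilb (Ibar I) (f+1) = 0 := by
      have := KI hI hA f; omega
    have h2 : hilb (Ibar I) (f+1+1) = 0 := ZP (Ibar_monIdeal hI) (f+1) h1
    have := KI hI hA (f+1)
    omega

lemma HE {n : ℕ} {I : Set (Fin (n+1) → ℕ)} (hI : MonIdeal I) (hA : ARL I)
    (h0 : (0 : Fin (n+1) → ℕ) ∉ I) :
    ∀ i d, hseq (fun e => hilb I e) (i+1) d = hseq (fun e => hilb (Ibar I) e) i d := by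
  have h0bar : (0 : Fin n → ℕ) ∉ Ibar I := by
    show Fin.snoc (0 : Fin n → ℕ) 0 ∈ I → False
    intro hmem
    apply h0
    have hzz : (Fin.snoc (0 : Fin n → ℕ) 0 : Fin (n+1) → ℕ) = 0 := by
      funext i
      induction i using Fin.lastCases <;> simp
    rwa [hzz] at hmem
  intro i
  induction i with
  | zero =>
    intro d
    cases d with
    | zero =>
      show 1 = hilb (Ibar I) 0
      rw [hilb_zero h0bar]
    | succ e =>
      show hilb I (e+1) - hilb I e = hilb (Ibar I) (e+1)
      rw [KI hI hA e]
  | succ i ih =>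
    intro d
    cases d with
    | zero => rfl
    | succ e =>
      show hseq _ (i+1) (e+1) - hseq _ (i+1) e = hseq _ i (e+1) - hseq _ i e
      rw [ih (e+1), ih e]

theorem main_unimodal : ∀ (n : ℕ) (I : Set (Fin n → ℕ)), MonIdeal I → ARL I →
    UnimodalAtTails (fun d => hilb I d) := by
  intro n
  induction n with
  | zero =>
    intro I hI hA
    apply tail_of_zero
    intro e he
    have hempty : {m : Fin 0 → ℕ | mdeg m = e ∧ m ∉ I} = ∅ := by
      rw [Set.eq_empty_iff_forall_notMem]
      rintro m ⟨hd, _⟩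
      have hz : mdeg m = 0 := by simp [mdeg]
      omega
    rw [hilb, hempty, Set.ncard_empty]
  | succ n ih =>
    intro I hI hA
    by_cases h0 : (0 : Fin (n+1) → ℕ) ∈ I
    · apply tail_of_zero
      intro e he
      have hempty : {m : Fin (n+1) → ℕ | mdeg m = e ∧ m ∉ I} = ∅ := by
        rw [Set.eq_empty_iff_forall_notMem]
        rintro m ⟨hd, hni⟩
        exact hni (hI 0 h0 m (fun i => Nat.zero_le _))
      rw [hilb, hempty, Set.ncard_empty]
    by_cases h1 : hilb I 1 = 0
    · apply tail_of_zero
      have haux : ∀ k, hilb I (k+1) = 0 := by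
        intro k
        induction k with
        | zero => exact h1
        | succ k ihk => exact ZP hI (k+1) ihk
      intro e he
      obtain ⟨k, rfl⟩ : ∃ k, e = k + 1 := ⟨e - 1, by omega⟩
      exact haux k
    rintro i _ hlt d ⟨r, ⟨h1r, hrle⟩, hrd⟩
    match i with
    | 0 =>
      show hilb I d ≤ hilb I (d - 1)
      have hbase : hilb I ((r-1)+1) ≤ hilb I (r-1) := by
        have hr' : (r-1)+1 = r := by omega
        rw [hr']
        exact hrle
      have hchain := dec_chain hI hA (r-1) hbase (d-1) (by omega)
      have hd' : (d-1)+1 = d := by omega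
      rwa [hd'] at hchain
    | (j+1) =>
      have hIb := ih (Ibar I) (Ibar_monIdeal hI) (Ibar_ARL hI hA)
      have hhe := HE hI hA h0
      have h1I : hilb I 0 = 1 := hilb_zero h0
      have hbar1 : hilb (Ibar I) 1 = hilb I 1 - hilb I 0 := KI hI hA 0
      have hlt' : j + 1 < max 1 (hilb I 1) := hlt
      have h2 : j + 1 < hilb I 1 := by omega
      have hrbar : r ∈ rset (fun e => hilb (Ibar I) e) j := by
        refine ⟨h1r, ?_⟩
        rw [← hhe j r, ← hhe j (r-1)]
        exact hrle
      have hD : Dval (fun e => hilb (Ibar I) e) ≤ j := Nat.sInf_le ⟨r, hrbar⟩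
      have hlt2 : j < max 1 ((fun e => hilb (Ibar I) e) 1) := by
        have : j < max 1 (hilb (Ibar I) 1) := by omega
        exact this
      have hfin := hIb j hD hlt2 d ⟨r, hrbar, hrd⟩
      show hseq (fun e => hilb I e) (j+1) d ≤ hseq (fun e => hilb I e) (j+1) (d-1)
      rw [hhe j d, hhe j (d-1)]
      exact hfin

end ArlProofAux
/-- The Hilbert function of `R/I` for any almost reverse
lexicographic ideal `I` is unimodal at each tail. -/
theorem arl_hilbert_unimodal_at_tails {n : ℕ} (I : Set (Fin n → ℕ))
    (hI : MonIdeal I) (hARL : ARL I) :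
    UnimodalAtTails (fun d => hilb I d) :=
  main_unimodal n I hI hARL
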